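/- Let κ ∈ (−1,1)∖{0}. Then both complex roots of the quadratic polynomial z ↦ (1−z)² + 4κ²z have modulus 1, and for every z in the open unit disc 𝔻, the value (1−z)² + 4κ²z does not lie in the half-line (−∞, 0] of the real axis. -/

import Mathlib

theorem stmt16 (κ : ℝ) (hκ : κ ∈ Set.Ioo (-1 : ℝ) 1) (hκ0 : κ ≠ 0) :
    (∀ z : ℂ, (1 - z) ^ 2 + 4 * (κ : ℂ) ^ 2 * z = 0 → ‖z‖ = 1) ∧
    (∀ z ∈ Metric.ball (0 : ℂ) 1, ∀ x : ℝ, x ≤ 0 →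
      (1 - z) ^ 2 + 4 * (κ : ℂ) ^ 2 * z ≠ (x : ℂ)) := by
  obtain ⟨hl, hr⟩ := hκ
  have hk2 : 0 < κ ^ 2 := by positivity
  have hk1 : κ ^ 2 < 1 := by nlinarith
  constructor
  · intro z hz
    have hre := congrArg Complex.re hz
    have him := congrArg Complex.im hz
    simp [pow_two, Complex.mul_re, Complex.mul_im, Complex.sub_re, Complex.sub_im] at hre him
    set a := z.re
    set b := z.im
    have him' : b * (4 * κ ^ 2 - 2 + 2 * a) = 0 := by ring_nf; ring_nf at him; linarith
    have habs : ‖z‖ = Real.sqrt (a ^ 2 + b ^ 2) := by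
      rw [Complex.norm_def, Complex.normSq_apply]; ring_nf; rfl
    rw [habs]
    have : a ^ 2 + b ^ 2 = 1 := by
      rcases mul_eq_zero.1 him' with hb | ha
      · exfalso
        nlinarith [sq_nonneg (a + 2 * κ ^ 2 - 1), mul_pos hk2 (by linarith : (0:ℝ) < 1 - κ ^ 2)]
      · nlinarith
    rw [this, Real.sqrt_one]
  · intro z hzb x hx hz
    have hre := congrArg Complex.re hz
    have him := congrArg Complex.im hz
    simp [pow_two, Complex.mul_re, Complex.mul_im, Complex.sub_re, Complex.sub_im] at hre him
    set a := z.re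
    set b := z.im
    have him' : b * (4 * κ ^ 2 - 2 + 2 * a) = 0 := by ring_nf; ring_nf at him; linarith
    have hball : a ^ 2 + b ^ 2 < 1 := by
      have := Metric.mem_ball.1 hzb
      rw [dist_zero_right, Complex.norm_def, Complex.normSq_apply] at this
      nlinarith [Real.sq_sqrt (by nlinarith [mul_self_nonneg a, mul_self_nonneg b] : (0:ℝ) ≤ a * a + b * b),
        Real.sqrt_nonneg (a * a + b * b)]
    rcases mul_eq_zero.1 him' with hb | ha
    · nlinarith [sq_nonneg (a + 2 * κ ^ 2 - 1), mul_pos hk2 (by linarith : (0:ℝ) < 1 - κ ^ 2)]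
    · nlinarith
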